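/- Second-order local expansion of a controlled ODE solution: Let h : [0,1] → ℝ^ℓ be continuously differentiable and let V₁, …, V_ℓ : ℝⁿ → ℝⁿ be twice continuously differentiable, bounded, with bounded first and second derivatives. Let z : [0,1] → ℝⁿ satisfy z_t = z₀ + ∫₀ᵗ Σ_{i=1}^ℓ V_i(z_r) ḣ_r^i dr for all t. Then there is a constant C such that for all 0 ≤ s ≤ t ≤ 1: |z_t − z_s − Σ_{i=1}^ℓ V_i(z_s)(h_t^i − h_s^i) − Σ_{i,j=1}^ℓ DV_j(z_s)[V_i(z_s)] ∫_s^t (h_r^i − h_s^i) ḣ_r^j dr| ≤ C (t − s)³. -/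

import Mathlib

open MeasureTheory Set intervalIntegral

/-- **Second-order local expansion of a controlled ODE solution.** If `z` solves
`ż_t = ∑ᵢ Vᵢ(z_t) ḣ_t^i` with `h` of class `C¹` and the vector fields `Vᵢ` of class `C²`,
bounded with bounded first and second derivatives, then
`z_t = z_s + ∑ᵢ Vᵢ(z_s)(h_t^i - h_s^i) + ∑_{i,j} DVⱼ(z_s)[Vᵢ(z_s)] ∫_s^t (h_r^i - h_s^i) ḣ_r^j dr
+ O((t-s)³)` uniformly over `0 ≤ s ≤ t ≤ 1`. -/
theorem controlled_ode_second_order_expansion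
    (ℓ n : ℕ) (h : ℝ → (Fin ℓ → ℝ)) (hh : ContDiff ℝ 1 h)
    (V : Fin ℓ → (Fin n → ℝ) → (Fin n → ℝ))
    (hV : ∀ i, ContDiff ℝ 2 (V i))
    (M : ℝ)
    (hVb0 : ∀ i x, ‖V i x‖ ≤ M)
    (hVb1 : ∀ i x, ‖fderiv ℝ (V i) x‖ ≤ M)
    (hVb2 : ∀ i x, ‖iteratedFDeriv ℝ 2 (V i) x‖ ≤ M)
    (z : ℝ → (Fin n → ℝ))
    (hz : ∀ t : ℝ, z t = z 0 + ∫ r in (0:ℝ)..t, ∑ i, deriv (fun u => h u i) r • V i (z r)) :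
    ∃ C : ℝ, ∀ s t : ℝ, 0 ≤ s → s ≤ t → t ≤ 1 →
      ‖z t - z s - ∑ i, (h t i - h s i) • V i (z s)
          - ∑ i, ∑ j, (∫ r in s..t, (h r i - h s i) * deriv (fun u => h u j) r) •
              fderiv ℝ (V j) (z s) (V i (z s))‖ ≤ C * (t - s) ^ 3 := by
  -- Abbreviations
  set g : Fin ℓ → ℝ → ℝ := fun i => deriv (fun u => h u i) with hgdef
  have hgr : ∀ (i : Fin ℓ) (r : ℝ), deriv (fun u => h u i) r = g i r := fun _ _ => rfl
  simp only [hgr] at hz ⊢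
  set F : ℝ → (Fin n → ℝ) := fun r => ∑ i, g i r • V i (z r) with hFdef'
  have hFdef : F = fun r => ∑ i, g i r • V i (z r) := rfl
  have hz' : ∀ t, z t = z 0 + ∫ r in (0:ℝ)..t, F r := hz
  have hgder : ∀ i, g i = deriv (fun u => h u i) := fun _ => rfl
  have hgi_cd : ∀ i, ContDiff ℝ 1 (fun u => h u i) := fun i =>
    ((ContinuousLinearMap.proj i : (Fin ℓ → ℝ) →L[ℝ] ℝ).contDiff).comp hh
  have hgc : ∀ i, Continuous (g i) := fun i => (hgi_cd i).continuous_deriv le_rfl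
  -- Replace `M` by a nonnegative bound `N`
  set N : ℝ := max M 0 with hNdef
  have hN : 0 ≤ N := le_max_right _ _
  have hVb0' : ∀ i x, ‖V i x‖ ≤ N := fun i x => (hVb0 i x).trans (le_max_left _ _)
  have hVb1' : ∀ i x, ‖fderiv ℝ (V i) x‖ ≤ N := fun i x => (hVb1 i x).trans (le_max_left _ _)
  have hVb2' : ∀ i x, ‖iteratedFDeriv ℝ 2 (V i) x‖ ≤ N := fun i x =>
    (hVb2 i x).trans (le_max_left _ _)
  -- A uniform bound `K` on the derivatives of the control on `[0,2]`
  obtain ⟨K0, hK0b⟩ := isCompact_Icc.exists_bound_of_continuousOn (f := deriv h)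
    ((hh.continuous_deriv le_rfl).continuousOn (s := Icc (0:ℝ) 2))
  set K : ℝ := max K0 0 with hKdef
  have hK0 : 0 ≤ K := le_max_right _ _
  have hgcomp : ∀ (i : Fin ℓ) (r : ℝ), g i r = deriv h r i := by
    intro i r
    have hd : HasDerivAt h (deriv h r) r := ((hh.differentiable one_ne_zero) r).hasDerivAt
    have := ((ContinuousLinearMap.proj i : (Fin ℓ → ℝ) →L[ℝ] ℝ).hasFDerivAt.comp_hasDerivAt
      r hd)
    exact this.deriv
  have hK : ∀ i, ∀ r ∈ Icc (0:ℝ) 2, |g i r| ≤ K := by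
    intro i r hr
    rw [hgcomp i r, ← Real.norm_eq_abs]
    exact (norm_le_pi_norm (deriv h r) i).trans ((hK0b r hr).trans (le_max_left _ _))
  -- ### Part A : the integral equation forces integrability of `F`
  have key : ∀ t : ℝ, 0 < t → IntegrableOn F (Ioc 0 t) := by
    have hbd : ∀ (T : ℝ), ∃ B, ∀ r ∈ Icc (0:ℝ) T, ‖F r‖ ≤ B := by
      intro T
      obtain ⟨B, hB⟩ := isCompact_Icc.exists_bound_of_continuousOn
        (f := fun r => ∑ i, |g i r| * N) (by fun_prop)
      refine ⟨B, fun r hr => ?_⟩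
      calc ‖F r‖ ≤ ∑ i, ‖g i r • V i (z r)‖ := by rw [hFdef]; exact norm_sum_le _ _
        _ ≤ ∑ i, |g i r| * N := by
            refine Finset.sum_le_sum fun i _ => ?_
            rw [norm_smul, Real.norm_eq_abs]
            exact mul_le_mul_of_nonneg_left (hVb0' i _) (abs_nonneg _)
        _ ≤ B := (le_abs_self _).trans (by simpa [Real.norm_eq_abs] using hB r hr)
    have hintOf : ∀ (s : Set ℝ) (T : ℝ), s ⊆ Icc 0 T → MeasurableSet s →
        AEStronglyMeasurable F (volume.restrict s) → IntegrableOn F s := by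
      intro s T hsub hms hmeas
      obtain ⟨B, hB⟩ := hbd T
      refine ⟨hmeas, ?_⟩
      refine HasFiniteIntegral.restrict_of_bounded (C := B) ?_ ?_
      · exact lt_of_le_of_lt (measure_mono hsub) measure_Icc_lt_top
      · exact (ae_restrict_iff' hms).2 (ae_of_all _ fun r hr => hB r (hsub hr))
    by_contra hcon
    push_neg at hcon
    obtain ⟨t₀, ht₀, hni⟩ := hcon
    set A : Set ℝ := {t | 0 < t ∧ ¬ IntegrableOn F (Ioc 0 t)} with hAdef
    have hAne : A.Nonempty := ⟨t₀, ht₀, hni⟩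
    have hAbd : BddBelow A := ⟨0, fun t ht => ht.1.le⟩
    set τ := sInf A with hτdef
    have hτ0 : 0 ≤ τ := le_csInf hAne fun t ht => ht.1.le
    have hup : ∀ t, τ < t → t ∈ A := by
      intro t ht
      obtain ⟨a, haA, hat⟩ := exists_lt_of_csInf_lt hAne ht
      exact ⟨lt_trans haA.1 hat, fun hint => haA.2 (hint.mono_set (Ioc_subset_Ioc_right hat.le))⟩
    have hconst : ∀ t, τ < t → z t = z 0 := by
      intro t ht
      have htA := hup t ht
      have : (∫ r in (0:ℝ)..t, F r) = 0 := by
        rw [intervalIntegral.integral_of_le htA.1.le]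
        exact integral_undef htA.2
      rw [hz' t, this, add_zero]
    have hlow : ∀ t, 0 < t → t < τ → IntegrableOn F (Ioc 0 t) := by
      intro t ht htτ
      by_contra hn
      exact absurd (csInf_le hAbd ⟨ht, hn⟩) (not_le.2 htτ)
    have hmeas1 : AEStronglyMeasurable F (volume.restrict (Ioo 0 τ)) := by
      have hun : Ioo 0 τ = ⋃ k : ℕ, Ioc 0 (τ - 1/(k+1)) := by
        ext x
        simp only [mem_Ioo, mem_iUnion, mem_Ioc]
        constructor
        · rintro ⟨hx0, hxτ⟩
          obtain ⟨k, hk⟩ := exists_nat_one_div_lt (sub_pos.2 hxτ)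
          exact ⟨k, hx0, by linarith⟩
        · rintro ⟨k, hx0, hxk⟩
          refine ⟨hx0, lt_of_le_of_lt hxk ?_⟩
          have : (0:ℝ) < 1/(k+1) := by positivity
          linarith
      rw [hun]
      rw [aestronglyMeasurable_iUnion_iff]
      intro k
      rcases le_or_gt (τ - 1/(k+1)) 0 with hle | hlt
      · rw [Ioc_eq_empty (by simpa using hle), Measure.restrict_empty]
        exact aestronglyMeasurable_zero_measure F
      · have hsub : τ - 1/(k+1) < τ := by
          have : (0:ℝ) < 1/(k+1) := by positivity
          linarith
        exact (hlow _ hlt hsub).aestronglyMeasurable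
    have hmeas2 : AEStronglyMeasurable F (volume.restrict (Ioc τ (τ+1))) := by
      have hG : Continuous (fun r => ∑ i, g i r • V i (z 0)) := by fun_prop
      refine hG.aestronglyMeasurable.congr ?_
      refine (ae_restrict_iff' measurableSet_Ioc).2 (ae_of_all _ fun r hr => ?_)
      rw [hFdef]
      simp only
      rw [hconst r hr.1]
    have hint : IntegrableOn F (Ioc 0 (τ+1)) := by
      have h1 : IntegrableOn F (Ioo 0 τ) :=
        hintOf _ (τ+1) (Ioo_subset_Icc_self.trans (Icc_subset_Icc_right (by linarith)))
          measurableSet_Ioo hmeas1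
      have h2 : IntegrableOn F (Ioc τ (τ+1)) :=
        hintOf _ (τ+1) ((Ioc_subset_Icc_self).trans (Icc_subset_Icc_left hτ0))
          measurableSet_Ioc hmeas2
      have h1' : IntegrableOn F (Ioc 0 τ) := by
        rw [IntegrableOn, show volume.restrict (Ioc (0:ℝ) τ) = volume.restrict (Ioo 0 τ) from
          (Measure.restrict_congr_set Ioo_ae_eq_Ioc).symm]
        exact h1
      have := h1'.union h2
      rwa [Ioc_union_Ioc_eq_Ioc hτ0 (by linarith)] at this
    exact (hup (τ+1) (by linarith)).2 hint
  -- ### Part B : consequences — regularity of `z`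
  have hFb : ∀ r ∈ Icc (0:ℝ) 2, ‖F r‖ ≤ ℓ * K * N := by
    intro r hr
    calc ‖F r‖ ≤ ∑ i, ‖g i r • V i (z r)‖ := by rw [hFdef]; exact norm_sum_le _ _
      _ ≤ ∑ _i : Fin ℓ, K * N := by
          refine Finset.sum_le_sum fun i _ => ?_
          rw [norm_smul, Real.norm_eq_abs]
          exact mul_le_mul (hK i r hr) (hVb0' i _) (norm_nonneg _) hK0
      _ = ℓ * K * N := by simp [mul_assoc]
  have hII : ∀ s t : ℝ, 0 ≤ s → s ≤ t → IntervalIntegrable F volume s t := by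
    intro s t hs hst
    rw [intervalIntegrable_iff_integrableOn_Ioc_of_le hst]
    rcases eq_or_lt_of_le (hs.trans hst) with ht | ht
    · rw [← ht]; simp [Ioc_eq_empty (by linarith : ¬ s < 0)]
    · exact (key t ht).mono_set (Ioc_subset_Ioc_left hs)
  have hdiff : ∀ s t : ℝ, 0 ≤ s → 0 ≤ t → z t - z s = ∫ r in s..t, F r := by
    intro s t hs ht
    rw [hz' t, hz' s]
    have := integral_interval_sub_left (hII 0 t le_rfl ht) (hII 0 s le_rfl hs)
    rw [← this]; abel
  have zLip : ∀ s t : ℝ, 0 ≤ s → s ≤ t → t ≤ 2 → ‖z t - z s‖ ≤ (ℓ * K * N) * (t - s) := by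
    intro s t hs hst ht2
    rw [hdiff s t hs (hs.trans hst)]
    have := intervalIntegral.norm_integral_le_of_norm_le_const (C := ℓ * K * N)
      (f := F) (a := s) (b := t) (fun x hx => by
        rw [uIoc_of_le hst] at hx
        exact hFb x ⟨hs.trans hx.1.le, hx.2.trans ht2⟩)
    rwa [abs_of_nonneg (by linarith)] at this
  have zcont : ContinuousOn z (Icc 0 2) := by
    have : LipschitzOnWith (Real.toNNReal (ℓ * K * N)) z (Icc 0 2) := by
      rw [lipschitzOnWith_iff_dist_le_mul]
      intro x hx y hy
      rcases le_total y x with hxy | hxy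
      · rw [dist_eq_norm, dist_eq_norm]
        calc ‖z x - z y‖ ≤ (ℓ * K * N) * (x - y) := zLip y x hy.1 hxy hx.2
          _ ≤ Real.toNNReal (ℓ * K * N) * ‖x - y‖ := by
              rw [Real.coe_toNNReal _ (by positivity)]
              have : x - y ≤ ‖x - y‖ := le_abs_self _
              exact mul_le_mul_of_nonneg_left this
                (mul_nonneg (mul_nonneg (Nat.cast_nonneg _) hK0) hN)
      · rw [dist_eq_norm, norm_sub_rev (z x), dist_eq_norm, norm_sub_rev x]
        calc ‖z y - z x‖ ≤ (ℓ * K * N) * (y - x) := zLip x y hx.1 hxy hy.2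
          _ ≤ Real.toNNReal (ℓ * K * N) * ‖y - x‖ := by
              rw [Real.coe_toNNReal _ (by positivity)]
              have : y - x ≤ ‖y - x‖ := le_abs_self _
              exact mul_le_mul_of_nonneg_left this
                (mul_nonneg (mul_nonneg (Nat.cast_nonneg _) hK0) hN)
    exact this.continuousOn
  have FcontOn : ContinuousOn F (Icc 0 2) := by
    rw [hFdef]
    refine continuousOn_finset_sum _ fun i _ => ((hgc i).continuousOn).smul ?_
    exact (hV i).continuous.comp_continuousOn zcont
  have FcontOnIoo : ContinuousOn F (Ioo 0 2) := FcontOn.mono Ioo_subset_Icc_self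
  have zHasDeriv : ∀ u ∈ Ioo (0:ℝ) 2, HasDerivAt z (F u) u := by
    intro u hu
    have hmeas := FcontOnIoo.stronglyMeasurableAtFilter isOpen_Ioo (μ := volume) u hu
    have hcont : ContinuousAt F u := FcontOnIoo.continuousAt (isOpen_Ioo.mem_nhds hu)
    have hd : HasDerivAt (fun t => z 0 + ∫ r in (0:ℝ)..t, F r) (F u) u := by
      have := (intervalIntegral.integral_hasDerivAt_right (hII 0 u le_rfl hu.1.le) hmeas hcont)
      simpa using this
    exact hd.congr_of_eventuallyEq (Filter.Eventually.of_forall hz')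
  have VFTC : ∀ (i : Fin ℓ) (s r : ℝ), 0 ≤ s → s ≤ r → r ≤ 1 →
      V i (z r) - V i (z s) = ∫ u in s..r, (fderiv ℝ (V i) (z u)) (F u) := by
    intro i s r hs hsr hr1
    have hIcc : Icc s r ⊆ Icc (0:ℝ) 2 := Icc_subset_Icc hs (by linarith)
    have hcont : ContinuousOn (fun u => V i (z u)) (Icc s r) :=
      (hV i).continuous.comp_continuousOn (zcont.mono hIcc)
    have hderiv : ∀ x ∈ Ioo s r, HasDerivWithinAt (fun u => V i (z u))
        ((fderiv ℝ (V i) (z x)) (F x)) (Ioi x) x := by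
      intro x hx
      have hx2 : x ∈ Ioo (0:ℝ) 2 := ⟨lt_of_le_of_lt hs hx.1, by linarith [hx.2]⟩
      have hfd : HasFDerivAt (V i) (fderiv ℝ (V i) (z x)) (z x) :=
        (((hV i).differentiable (by norm_num)) (z x)).hasFDerivAt
      exact (hfd.comp_hasDerivAt x (zHasDeriv x hx2)).hasDerivWithinAt
    have hint : IntervalIntegrable (fun u => (fderiv ℝ (V i) (z u)) (F u)) volume s r := by
      refine (ContinuousOn.intervalIntegrable ?_)
      rw [uIcc_of_le hsr]
      refine ContinuousOn.clm_apply ?_ (FcontOn.mono hIcc)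
      exact ((hV i).continuous_fderiv (by norm_num)).comp_continuousOn (zcont.mono hIcc)
    rw [intervalIntegral.integral_eq_sub_of_hasDeriv_right_of_le hsr hcont hderiv hint]
  -- ### Part C : the second order expansion
  refine ⟨2 * ((ℓ:ℝ) * K) ^ 3 * N ^ 3, ?_⟩
  have hcomp : ∀ (i : Fin ℓ) (a b : ℝ), h b i - h a i = ∫ r in a..b, g i r := by
    intro i a b
    rw [hgder i]
    exact (intervalIntegral.integral_deriv_eq_sub
      (fun x _ => ((hgi_cd i).differentiable one_ne_zero) x)
      ((hgder i ▸ hgc i).intervalIntegrable a b)).symm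
  have hVLip : ∀ (i : Fin ℓ) x y, ‖V i x - V i y‖ ≤ N * ‖x - y‖ := by
    intro i x y
    exact Convex.norm_image_sub_le_of_norm_fderiv_le
      (fun w _ => ((hV i).differentiable (by norm_num)) w)
      (fun w _ => hVb1' i w) convex_univ (mem_univ y) (mem_univ x)
  have hDVcd : ∀ i : Fin ℓ, ContDiff ℝ 1 (fderiv ℝ (V i)) := by
    intro i
    exact (hV i).fderiv_right (m := 1) (by norm_num)
  have hDVb : ∀ (i : Fin ℓ) x, ‖fderiv ℝ (fderiv ℝ (V i)) x‖ ≤ N := by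
    intro i x
    calc ‖fderiv ℝ (fderiv ℝ (V i)) x‖
        = ‖iteratedFDeriv ℝ 0 (fderiv ℝ (fderiv ℝ (V i))) x‖ := by rw [norm_iteratedFDeriv_zero]
      _ = ‖iteratedFDeriv ℝ 1 (fderiv ℝ (V i)) x‖ := norm_iteratedFDeriv_fderiv
      _ = ‖iteratedFDeriv ℝ 2 (V i) x‖ := norm_iteratedFDeriv_fderiv
      _ ≤ N := hVb2' i x
  have hDVLip : ∀ (i : Fin ℓ) x y, ‖fderiv ℝ (V i) x - fderiv ℝ (V i) y‖ ≤ N * ‖x - y‖ := by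
    intro i x y
    exact Convex.norm_image_sub_le_of_norm_fderiv_le
      (fun w _ => ((hDVcd i).differentiable one_ne_zero) w)
      (fun w _ => hDVb i w) convex_univ (mem_univ y) (mem_univ x)
  intro s t hs hst ht1
  have hst2 : t ≤ 2 := by linarith
  have hIccsub : Icc s t ⊆ Icc (0:ℝ) 2 := Icc_subset_Icc hs hst2
  set W : Fin ℓ → Fin ℓ → (Fin n → ℝ) :=
    fun i j => fderiv ℝ (V i) (z s) (V j (z s)) with hWdef
  set R : Fin ℓ → ℝ → (Fin n → ℝ) := fun i r => ∑ j, (h r j - h s j) • W i j with hRdef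
  set E : Fin ℓ → ℝ → (Fin n → ℝ) :=
    fun i u => (fderiv ℝ (V i) (z u)) (F u) - ∑ j, g j u • W i j with hEdef
  have hLKM : (0:ℝ) ≤ (ℓ:ℝ) * K * N := mul_nonneg (mul_nonneg (Nat.cast_nonneg _) hK0) hN
  have h2MM : (0:ℝ) ≤ 2 * N * N := by nlinarith
  set C₁ : ℝ := (ℓ : ℝ) * K * (2 * N * N * ((ℓ:ℝ) * K * N)) with hC₁def
  have hC₁0 : 0 ≤ C₁ := by
    rw [hC₁def]
    exact mul_nonneg (mul_nonneg (Nat.cast_nonneg _) hK0) (mul_nonneg h2MM hLKM)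
  have hEbd : ∀ (i : Fin ℓ), ∀ u ∈ Icc s t, ‖E i u‖ ≤ C₁ * (t - s) := by
    intro i u hu
    have hu02 : u ∈ Icc (0:ℝ) 2 := hIccsub hu
    have hzu : ‖z u - z s‖ ≤ (ℓ * K * N) * (u - s) := zLip s u hs hu.1 hu02.2
    have hterm : ∀ j : Fin ℓ, ‖fderiv ℝ (V i) (z u) (V j (z u)) - W i j‖
        ≤ 2 * N * N * ((ℓ:ℝ) * K * N) * (t - s) := by
      intro j
      have hsplit : fderiv ℝ (V i) (z u) (V j (z u)) - W i j
          = (fderiv ℝ (V i) (z u) - fderiv ℝ (V i) (z s)) (V j (z u))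
            + (fderiv ℝ (V i) (z s)) (V j (z u) - V j (z s)) := by
        simp only [hWdef, ContinuousLinearMap.sub_apply, map_sub]
        abel
      rw [hsplit]
      have h1 : ‖(fderiv ℝ (V i) (z u) - fderiv ℝ (V i) (z s)) (V j (z u))‖
          ≤ (N * ‖z u - z s‖) * N :=
        le_trans (ContinuousLinearMap.le_opNorm _ _)
          (mul_le_mul (hDVLip i _ _) (hVb0' j _) (norm_nonneg _)
            (mul_nonneg hN (norm_nonneg _)))
      have h2 : ‖(fderiv ℝ (V i) (z s)) (V j (z u) - V j (z s))‖
          ≤ N * (N * ‖z u - z s‖) :=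
        le_trans (ContinuousLinearMap.le_opNorm _ _)
          (mul_le_mul (hVb1' i _) (hVLip j _ _) (norm_nonneg _)
            (le_trans (norm_nonneg _) (hVb1' i (z s))))
      have husts : u - s ≤ t - s := by linarith [hu.2]
      have hzu' : ‖z u - z s‖ ≤ (ℓ * K * N) * (t - s) :=
        hzu.trans (mul_le_mul_of_nonneg_left husts hLKM)
      calc ‖_ + _‖ ≤ (N * ‖z u - z s‖) * N + N * (N * ‖z u - z s‖) :=
            (norm_add_le _ _).trans (add_le_add h1 h2)
        _ = 2 * N * N * ‖z u - z s‖ := by ring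
        _ ≤ 2 * N * N * ((ℓ:ℝ) * K * N * (t - s)) := by
            exact mul_le_mul_of_nonneg_left hzu' h2MM
        _ = 2 * N * N * ((ℓ:ℝ) * K * N) * (t - s) := by ring
    have hEeq : E i u = ∑ j, g j u • (fderiv ℝ (V i) (z u) (V j (z u)) - W i j) := by
      simp only [hEdef, hFdef, _root_.map_sum, _root_.map_smul, smul_sub,
        Finset.sum_sub_distrib]
    rw [hEeq]
    calc ‖∑ j, g j u • (fderiv ℝ (V i) (z u) (V j (z u)) - W i j)‖
        ≤ ∑ j, ‖g j u • (fderiv ℝ (V i) (z u) (V j (z u)) - W i j)‖ := norm_sum_le _ _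
      _ ≤ ∑ _j : Fin ℓ, K * (2 * N * N * ((ℓ:ℝ) * K * N) * (t - s)) := by
          refine Finset.sum_le_sum fun j _ => ?_
          rw [norm_smul, Real.norm_eq_abs]
          exact mul_le_mul (hK j u hu02) (hterm j) (norm_nonneg _) hK0
      _ = C₁ * (t - s) := by simp [hC₁def]; ring
  have hInner : ∀ (i : Fin ℓ), ∀ r ∈ Icc s t,
      ‖V i (z r) - V i (z s) - R i r‖ ≤ (C₁ * (t - s)) * (r - s) := by
    intro i r hr
    have hr1 : r ≤ 1 := le_trans hr.2 ht1
    have hRint : R i r = ∫ u in s..r, ∑ j, g j u • W i j := by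
      rw [hRdef]
      simp only
      rw [intervalIntegral.integral_finset_sum]
      · exact Finset.sum_congr rfl fun j _ => by
          rw [hcomp j s r, ← intervalIntegral.integral_smul_const]
      · intro j _
        exact (((hgc j).smul continuous_const)).intervalIntegrable _ _
    have hXint : IntervalIntegrable (fun u => (fderiv ℝ (V i) (z u)) (F u)) volume s r := by
      refine (ContinuousOn.intervalIntegrable ?_)
      rw [uIcc_of_le hr.1]
      have hsub2 : Icc s r ⊆ Icc (0:ℝ) 2 := Icc_subset_Icc hs (by linarith)
      refine ContinuousOn.clm_apply ?_ (FcontOn.mono hsub2)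
      exact ((hV i).continuous_fderiv (by norm_num)).comp_continuousOn (zcont.mono hsub2)
    have hYint : IntervalIntegrable (fun u => ∑ j, g j u • W i j) volume s r :=
      Continuous.intervalIntegrable
        (continuous_finset_sum _ fun j _ => (hgc j).smul continuous_const) _ _
    have hEint : V i (z r) - V i (z s) - R i r = ∫ u in s..r, E i u := by
      rw [VFTC i s r hs hr.1 hr1, hRint]
      exact (intervalIntegral.integral_sub hXint hYint).symm
    rw [hEint]
    have := intervalIntegral.norm_integral_le_of_norm_le_const (C := C₁ * (t - s))
      (f := E i) (a := s) (b := r) (fun u hu => by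
        rw [uIoc_of_le hr.1] at hu
        exact hEbd i u ⟨le_of_lt hu.1, le_trans hu.2 hr.2⟩)
    rwa [abs_of_nonneg (by linarith [hr.1])] at this
  have T2 : ∑ i, (h t i - h s i) • V i (z s)
      = ∫ r in s..t, ∑ i, g i r • V i (z s) := by
    rw [intervalIntegral.integral_finset_sum]
    · exact Finset.sum_congr rfl fun i _ => by
        rw [hcomp i s t, ← intervalIntegral.integral_smul_const]
    · intro i _
      exact (((hgc i).smul continuous_const)).intervalIntegrable _ _
  have T3 : (∑ i, ∑ j, (∫ r in s..t, (h r i - h s i) * g j r) •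
        fderiv ℝ (V j) (z s) (V i (z s)))
      = ∫ r in s..t, ∑ i, g i r • R i r := by
    rw [Finset.sum_comm]
    have step1 : ∀ p q : Fin ℓ, (∫ r in s..t, (h r q - h s q) * g p r) • W p q
        = ∫ r in s..t, ((h r q - h s q) * g p r) • W p q := fun p q =>
      (intervalIntegral.integral_smul_const _ _).symm
    calc (∑ p, ∑ q, (∫ r in s..t, (h r q - h s q) * g p r) • W p q)
        = ∑ p, ∫ r in s..t, ∑ q, ((h r q - h s q) * g p r) • W p q := by
          refine Finset.sum_congr rfl fun p _ => ?_
          rw [intervalIntegral.integral_finset_sum]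
          · exact Finset.sum_congr rfl fun q _ => step1 p q
          · intro q _
            refine (Continuous.intervalIntegrable ?_ _ _)
            exact ((((continuous_apply q).comp hh.continuous).sub
              continuous_const).mul (hgc p)).smul continuous_const
      _ = ∫ r in s..t, ∑ p, ∑ q, ((h r q - h s q) * g p r) • W p q := by
          rw [intervalIntegral.integral_finset_sum]
          intro p _
          refine (Continuous.intervalIntegrable ?_ _ _)
          refine continuous_finset_sum _ fun q _ => ?_
          exact ((((continuous_apply q).comp hh.continuous).sub
            continuous_const).mul (hgc p)).smul continuous_const
      _ = ∫ r in s..t, ∑ p, g p r • R p r := by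
          refine intervalIntegral.integral_congr fun r _ => ?_
          refine Finset.sum_congr rfl fun p _ => ?_
          rw [hRdef]
          simp only [Finset.smul_sum, smul_smul]
          exact Finset.sum_congr rfl fun q _ => by rw [mul_comm]
  have Rcont : ∀ i : Fin ℓ, Continuous (fun r => R i r) := by
    intro i
    refine continuous_finset_sum _ fun j _ => ?_
    exact (((continuous_apply j).comp hh.continuous).sub continuous_const).smul continuous_const
  have I1 : IntervalIntegrable F volume s t := hII s t hs hst
  have I2 : IntervalIntegrable (fun r => ∑ i, g i r • V i (z s)) volume s t :=
    Continuous.intervalIntegrable (by fun_prop) _ _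
  have I3 : IntervalIntegrable (fun r => ∑ i, g i r • R i r) volume s t := by
    refine Continuous.intervalIntegrable ?_ _ _
    exact continuous_finset_sum _ fun i _ => (hgc i).smul (Rcont i)
  rw [hdiff s t hs (hs.trans hst), T2, T3, ← intervalIntegral.integral_sub I1 I2,
    ← intervalIntegral.integral_sub (I1.sub I2) I3]
  have hptwise : ∀ r : ℝ, F r - (∑ i, g i r • V i (z s)) - (∑ i, g i r • R i r)
      = ∑ i, g i r • (V i (z r) - V i (z s) - R i r) := by
    intro r
    simp [hFdef, smul_sub, Finset.sum_sub_distrib]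
  rw [intervalIntegral.integral_congr (g := fun r => ∑ i, g i r • (V i (z r) - V i (z s) - R i r))
    (fun r _ => hptwise r)]
  have hbound := intervalIntegral.norm_integral_le_of_norm_le_const
    (C := (ℓ:ℝ) * K * (C₁ * (t - s) * (t - s)))
    (f := fun r => ∑ i, g i r • (V i (z r) - V i (z s) - R i r)) (a := s) (b := t)
    (fun r hr => by
      rw [uIoc_of_le hst] at hr
      have hrIcc : r ∈ Icc s t := ⟨hr.1.le, hr.2⟩
      calc ‖∑ i, g i r • (V i (z r) - V i (z s) - R i r)‖
          ≤ ∑ i, ‖g i r • (V i (z r) - V i (z s) - R i r)‖ := norm_sum_le _ _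
        _ ≤ ∑ _i : Fin ℓ, K * (C₁ * (t - s) * (t - s)) := by
            refine Finset.sum_le_sum fun i _ => ?_
            rw [norm_smul, Real.norm_eq_abs]
            refine mul_le_mul (hK i r (hIccsub hrIcc)) ?_ (norm_nonneg _) hK0
            refine (hInner i r hrIcc).trans ?_
            exact mul_le_mul_of_nonneg_left (by linarith [hr.2])
              (mul_nonneg hC₁0 (by linarith))
        _ = (ℓ:ℝ) * K * (C₁ * (t - s) * (t - s)) := by
            rw [Finset.sum_const, Finset.card_univ, Fintype.card_fin, nsmul_eq_mul]; ring)
  rw [abs_of_nonneg (by linarith)] at hbound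
  refine hbound.trans (le_of_eq ?_)
  rw [hC₁def]; ring
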